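/- (KL property of the merit function.) Let ξ > 0 and λ > 0, let z̄ ∈ ℝ^d with x̄ := prox_{λφ}(z̄), and suppose F_nor(z̄) = 0. Suppose ψ satisfies the KL inequality at x̄ with desingularizing function s ↦ c·s^{1−θ} for some c > 0 and θ ∈ [0,1). Then, setting θ̂ := max{θ, 1/2} and ĉ := ((c(1−θ))^{1/θ̂} + ξλ/2)^{θ̂}, there exist η̂ ∈ (0,∞] and a neighborhood V of z̄ such that |H_ξ(z) − H_ξ(z̄)|^{θ̂} ≤ ĉ·‖F_nor(z)‖ for all z ∈ V with |H_ξ(z) − H_ξ(z̄)| < η̂. -/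

import Mathlib

open MeasureTheory Filter Real Set Topology
open scoped ENNReal NNReal

variable {d : ℕ}

local notation "E" => EuclideanSpace ℝ (Fin d)
local notation "⟪" x ", " y "⟫" => @inner ℝ _ _ x y

/-- The normal map `F_nor(z) = ∇f(prox z) + (z - prox z)/λ`. -/
noncomputable def Fnor (f' prox : E → E) (lam : ℝ) (z : E) : E :=
  f' (prox z) + lam⁻¹ • (z - prox z)

/-- The natural residual `F_nat(x) = x - prox(x - λ ∇f x)`. -/
noncomputable def Fnat (f' prox : E → E) (lam : ℝ) (x : E) : E :=
  x - prox (x - lam • f' x)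

/-- The convex subdifferential of an `EReal`-valued function. -/
def subdiff (φ : E → EReal) (x : E) : Set E :=
  {v : E | ∀ y : E, φ x + ((⟪v, y - x⟫ : ℝ) : EReal) ≤ φ y}

/-- The real value of `ψ = f + φ` (finite on the effective domain of `φ`). -/
noncomputable def psiR (f : E → ℝ) (φ : E → EReal) (x : E) : ℝ :=
  f x + (φ x).toReal

/-- The merit function `H_ξ(z) = ψ(prox z) + (ξ λ / 2) ‖F_nor z‖²`. -/
noncomputable def Hmer (f : E → ℝ) (φ : E → EReal) (f' prox : E → E) (lam ξ : ℝ) (z : E) : ℝ :=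
  psiR f φ (prox z) + ξ * lam / 2 * ‖Fnor f' prox lam z‖ ^ 2

/-- The KL inequality at `xbar` with desingularizing function `s ↦ c s^(1-θ)`. -/
def KLAt (f : E → ℝ) (f' : E → E) (φ : E → EReal) (c θ : ℝ) (xbar : E) : Prop :=
  ∃ η > (0 : ℝ), ∃ U ∈ nhds xbar, ∀ v ∈ U,
    0 < |psiR f φ v - psiR f φ xbar| → |psiR f φ v - psiR f φ xbar| < η →
      ∀ w ∈ subdiff φ v,
        1 ≤ c * (1 - θ) * |psiR f φ v - psiR f φ xbar| ^ (-θ) * ‖f' v + w‖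

lemma prox_ne_top (φ : E → EReal) (prox : E → E) (lam : ℝ)
    (hφnebot : ∀ v : E, φ v ≠ ⊥) (hφnetop : ∃ v : E, φ v ≠ ⊤)
    (hprox : ∀ u v : E,
      φ (prox u) + ((‖u - prox u‖ ^ 2 / (2 * lam) : ℝ) : EReal)
        ≤ φ v + ((‖u - v‖ ^ 2 / (2 * lam) : ℝ) : EReal)) (u : E) :
    φ (prox u) ≠ ⊤ := by
  obtain ⟨v0, hv0⟩ := hφnetop
  intro htop
  have h := hprox u v0
  rw [htop, EReal.top_add_coe] at h
  rw [← EReal.coe_toReal hv0 (hφnebot v0)] at h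
  rw [← EReal.coe_add] at h
  exact EReal.coe_ne_top _ (top_le_iff.mp h)

lemma prox_subdiff (φ : E → EReal) (prox : E → E) (lam : ℝ) (hlam : 0 < lam)
    (hφconv : ∀ u v : E, ∀ a b : ℝ, 0 ≤ a → 0 ≤ b → a + b = 1 →
      φ (a • u + b • v) ≤ (a : EReal) * φ u + (b : EReal) * φ v)
    (hφnebot : ∀ v : E, φ v ≠ ⊥) (hφnetop : ∃ v : E, φ v ≠ ⊤)
    (hprox : ∀ u v : E,
      φ (prox u) + ((‖u - prox u‖ ^ 2 / (2 * lam) : ℝ) : EReal)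
        ≤ φ v + ((‖u - v‖ ^ 2 / (2 * lam) : ℝ) : EReal)) (u : E) :
    lam⁻¹ • (u - prox u) ∈ subdiff φ (prox u) := by
  intro y
  by_cases hy : φ y = ⊤
  · rw [hy]; exact le_top
  set x := prox u with hx
  have hxt : φ x ≠ ⊤ := prox_ne_top φ prox lam hφnebot ⟨_, hy⟩ hprox u
  set a := (φ x).toReal with ha
  set b := (φ y).toReal with hb
  rw [← EReal.coe_toReal hxt (hφnebot x), ← EReal.coe_toReal hy (hφnebot y), ← ha, ← hb,
    ← EReal.coe_add, EReal.coe_le_coe_iff]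
  rw [real_inner_smul_left]
  set G := (⟪u - x, y - x⟫ : ℝ) with hG
  set N := ‖y - x‖ ^ 2 with hN
  -- key inequality for each t ∈ (0,1]
  have key : ∀ t : ℝ, 0 < t → t ≤ 1 → 2 * G ≤ 2 * lam * (b - a) + t * N := by
    intro t ht ht1
    have hconv := hφconv x y (1 - t) t (by linarith) ht.le (by ring)
    have hp := hprox u ((1 - t) • x + t • y)
    rw [← hx] at hp
    have hchain : ((a : ℝ) : EReal) + ((‖u - x‖ ^ 2 / (2 * lam) : ℝ) : EReal)
        ≤ (((1 - t) * a + t * b : ℝ) : EReal)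
          + ((‖u - ((1 - t) • x + t • y)‖ ^ 2 / (2 * lam) : ℝ) : EReal) := by
      rw [EReal.coe_toReal hxt (hφnebot x)]
      refine hp.trans (add_le_add ?_ le_rfl)
      refine hconv.trans_eq ?_
      rw [← EReal.coe_toReal hxt (hφnebot x), ← EReal.coe_toReal hy (hφnebot y), ← ha, ← hb]
      norm_cast
    rw [← EReal.coe_add, ← EReal.coe_add, EReal.coe_le_coe_iff] at hchain
    have hnorm : ‖u - ((1 - t) • x + t • y)‖ ^ 2 = ‖u - x‖ ^ 2 - 2 * (t * G) + t ^ 2 * N := by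
      have e : u - ((1 - t) • x + t • y) = (u - x) - t • (y - x) := by module
      rw [e, norm_sub_sq_real, real_inner_smul_right, norm_smul, Real.norm_eq_abs,
        abs_of_pos ht, mul_pow, ← hG, ← hN]
    rw [hnorm] at hchain
    have h2l : (0 : ℝ) < 2 * lam := by linarith
    have hchain2 : t * (2 * G) ≤ t * (2 * lam * (b - a) + t * N) := by
      have hP : (‖u - x‖ ^ 2 - 2 * (t * G) + t ^ 2 * N) / (2 * lam)
          = ‖u - x‖ ^ 2 / (2 * lam) - 2 * (t * G) / (2 * lam) + t ^ 2 * N / (2 * lam) := by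
        ring
      rw [hP] at hchain
      have h1 : 2 * (t * G) / (2 * lam) ≤ t * b - t * a + t ^ 2 * N / (2 * lam) := by linarith
      rw [div_le_iff₀ h2l, add_mul, div_mul_cancel₀ _ h2l.ne'] at h1
      linarith [h1]
    exact le_of_mul_le_mul_left hchain2 ht
  -- take t → 0
  have h2G : 2 * G ≤ 2 * lam * (b - a) := by
    refine le_of_forall_pos_le_add fun ε hε => ?_
    have hN1 : (0 : ℝ) < N + 1 := by positivity
    set t := min 1 (ε / (N + 1)) with htdef
    have htpos : 0 < t := lt_min one_pos (by positivity)
    have ht1 : t ≤ 1 := min_le_left _ _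
    have := key t htpos ht1
    have htN : t * N ≤ ε := by
      have ht2 : t ≤ ε / (N + 1) := min_le_right _ _
      have hNnn : 0 ≤ N := by rw [hN]; positivity
      calc t * N ≤ (ε / (N + 1)) * N := by
            exact mul_le_mul_of_nonneg_right ht2 hNnn
        _ ≤ ε := by
            rw [div_mul_eq_mul_div, div_le_iff₀ hN1]
            nlinarith
    linarith
  have : G ≤ lam * (b - a) := by linarith
  have hfin : lam⁻¹ * G ≤ b - a := by
    have := mul_le_mul_of_nonneg_left this (inv_nonneg.mpr hlam.le)
    rwa [← mul_assoc, inv_mul_cancel₀ hlam.ne', one_mul] at this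
  linarith

lemma prox_nonexp (φ : E → EReal) (prox : E → E) (lam : ℝ) (hlam : 0 < lam)
    (hφconv : ∀ u v : E, ∀ a b : ℝ, 0 ≤ a → 0 ≤ b → a + b = 1 →
      φ (a • u + b • v) ≤ (a : EReal) * φ u + (b : EReal) * φ v)
    (hφnebot : ∀ v : E, φ v ≠ ⊥) (hφnetop : ∃ v : E, φ v ≠ ⊤)
    (hprox : ∀ u v : E,
      φ (prox u) + ((‖u - prox u‖ ^ 2 / (2 * lam) : ℝ) : EReal)
        ≤ φ v + ((‖u - v‖ ^ 2 / (2 * lam) : ℝ) : EReal)) (u v : E) :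
    ‖prox u - prox v‖ ≤ ‖u - v‖ := by
  set x := prox u with hx
  set y := prox v with hy
  have hu := prox_subdiff φ prox lam hlam hφconv hφnebot hφnetop hprox u y
  have hv := prox_subdiff φ prox lam hlam hφconv hφnebot hφnetop hprox v x
  have hxt : φ x ≠ ⊤ := prox_ne_top φ prox lam hφnebot hφnetop hprox u
  have hyt : φ y ≠ ⊤ := prox_ne_top φ prox lam hφnebot hφnetop hprox v
  set a := (φ x).toReal with ha
  set b := (φ y).toReal with hb
  have hu' : a + ⟪lam⁻¹ • (u - x), y - x⟫ ≤ b := by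
    have h := hu
    rw [← hx, ← EReal.coe_toReal hxt (hφnebot x), ← EReal.coe_toReal hyt (hφnebot y), ← ha, ← hb,
      ← EReal.coe_add, EReal.coe_le_coe_iff] at h
    exact h
  have hv' : b + ⟪lam⁻¹ • (v - y), x - y⟫ ≤ a := by
    have h := hv
    rw [← hy, ← EReal.coe_toReal hyt (hφnebot y), ← EReal.coe_toReal hxt (hφnebot x), ← hb, ← ha,
      ← EReal.coe_add, EReal.coe_le_coe_iff] at h
    exact h
  rw [real_inner_smul_left] at hu' hv'
  have hsum : ⟪u - x, y - x⟫ + ⟪v - y, x - y⟫ ≤ 0 := by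
    have h := add_le_add hu' hv'
    have hmul : lam⁻¹ * ⟪u - x, y - x⟫ + lam⁻¹ * ⟪v - y, x - y⟫ ≤ 0 := by linarith
    nlinarith [inv_pos.mpr hlam]
  have expand : (⟪u - x, y - x⟫ : ℝ) + ⟪v - y, x - y⟫ = ‖x - y‖ ^ 2 - ⟪u - v, x - y⟫ := by
    simp only [inner_sub_left, inner_sub_right, ← norm_sub_sq_real]
    rw [norm_sub_sq_real]
    simp only [real_inner_self_eq_norm_sq]
    linarith [real_inner_comm x y, real_inner_comm u x, real_inner_comm v y]
  have hkey : ‖x - y‖ ^ 2 ≤ ⟪u - v, x - y⟫ := by linarith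
  have hcs : (⟪u - v, x - y⟫ : ℝ) ≤ ‖u - v‖ * ‖x - y‖ := real_inner_le_norm _ _
  rcases eq_or_lt_of_le (norm_nonneg (x - y)) with h0 | h0
  · rw [← h0]; exact norm_nonneg _
  · nlinarith

/-- KL-type property of the merit function `H_ξ`. -/
theorem stmt11
    (f : E → ℝ) (f' : E → E) (φ : E → EReal) (prox : E → E) (lam : ℝ)
    (hlam : 0 < lam)
    (hf : ∀ v : E, HasGradientAt f (f' v) v) (hf'cont : Continuous f')
    (hφconv : ∀ u v : E, ∀ a b : ℝ, 0 ≤ a → 0 ≤ b → a + b = 1 →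
      φ (a • u + b • v) ≤ (a : EReal) * φ u + (b : EReal) * φ v)
    (hφlsc : LowerSemicontinuous φ)
    (hφnebot : ∀ v : E, φ v ≠ ⊥) (hφnetop : ∃ v : E, φ v ≠ ⊤)
    (hprox : ∀ u v : E,
      φ (prox u) + ((‖u - prox u‖ ^ 2 / (2 * lam) : ℝ) : EReal)
        ≤ φ v + ((‖u - v‖ ^ 2 / (2 * lam) : ℝ) : EReal))
    (ξ : ℝ) (hξ : 0 < ξ)
    (zbar : E) (hzero : Fnor f' prox lam zbar = 0)
    (c θ : ℝ) (hc : 0 < c) (hθ : θ ∈ Set.Ico (0 : ℝ) 1)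
    (hKL : KLAt f f' φ c θ (prox zbar)) :
    ∀ θhat chat : ℝ,
      θhat = max θ (1 / 2) →
      chat = ((c * (1 - θ)) ^ (1 / θhat) + ξ * lam / 2) ^ θhat →
      ∃ ηhat > (0 : ℝ), ∃ V ∈ nhds zbar, ∀ w ∈ V,
        |Hmer f φ f' prox lam ξ w - Hmer f φ f' prox lam ξ zbar| < ηhat →
          |Hmer f φ f' prox lam ξ w - Hmer f φ f' prox lam ξ zbar| ^ θhat ≤
            chat * ‖Fnor f' prox lam w‖ := by
  intro θhat chat hθhat hchat
  obtain ⟨hθ0, hθ1⟩ := hθ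
  have hth_half : (1 / 2 : ℝ) ≤ θhat := hθhat ▸ le_max_right _ _
  have hth_θ : θ ≤ θhat := hθhat ▸ le_max_left _ _
  have hth_pos : 0 < θhat := lt_of_lt_of_le (by norm_num) hth_half
  have hinv_le2 : 1 / θhat ≤ 2 := by rw [div_le_iff₀ hth_pos]; linarith
  have hinv_ge : (1 / θhat) * θhat = 1 := div_mul_cancel₀ 1 hth_pos.ne'
  set A := c * (1 - θ) with hA
  have hApos : 0 < A := mul_pos hc (by linarith)
  set B := A ^ (1 / θhat) + ξ * lam / 2 with hB
  have hxl2 : 0 < ξ * lam / 2 := by positivity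
  have hBpos : 0 < B := add_pos (Real.rpow_pos_of_pos hApos _) hxl2
  have hchatB : chat = B ^ θhat := hchat
  have hchat_nn : 0 ≤ chat := hchatB ▸ Real.rpow_nonneg hBpos.le _
  obtain ⟨η, hη, U, hU, hKLU⟩ := hKL
  set ηhat := min η 1 / 2 with hηhat
  have hηhat_pos : 0 < ηhat := by
    have : 0 < min η 1 := lt_min hη one_pos
    positivity
  refine ⟨ηhat, hηhat_pos, ?_⟩
  obtain ⟨r, hr, hball⟩ := Metric.mem_nhds_iff.mp hU
  have hprox_cont : Continuous prox := by
    have : LipschitzWith 1 prox := by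
      apply LipschitzWith.of_dist_le_mul
      intro u v
      rw [dist_eq_norm, dist_eq_norm, NNReal.coe_one, one_mul]
      exact prox_nonexp φ prox lam hlam hφconv hφnebot hφnetop hprox u v
    exact this.continuous
  have hFcont : Continuous fun z : E => ‖Fnor f' prox lam z‖ := by
    apply Continuous.norm
    unfold Fnor
    exact (hf'cont.comp hprox_cont).add (by fun_prop : Continuous fun z : E => lam⁻¹ • (z - prox z))
  have hF0 : ‖Fnor f' prox lam zbar‖ = 0 := by rw [hzero, norm_zero]
  refine ⟨Metric.ball zbar r ∩ ({z : E | ‖Fnor f' prox lam z‖ < 1}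
      ∩ {z : E | ξ * lam / 2 * ‖Fnor f' prox lam z‖ ^ 2 < ηhat}), ?_, ?_⟩
  · refine inter_mem (Metric.ball_mem_nhds _ hr) (inter_mem ?_ ?_)
    · exact (isOpen_lt hFcont continuous_const).mem_nhds (by simp [hF0])
    · refine (isOpen_lt (by fun_prop) continuous_const).mem_nhds ?_
      simp only [mem_setOf_eq, hF0]
      simpa using hηhat_pos
  · intro z hz hD
    obtain ⟨hz1, hz2, hz3⟩ := hz
    simp only [mem_setOf_eq] at hz2 hz3
    set Fw := ‖Fnor f' prox lam z‖ with hFw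
    have hFnn : 0 ≤ Fw := norm_nonneg _
    set Δ := |psiR f φ (prox z) - psiR f φ (prox zbar)| with hΔ
    set D := |Hmer f φ f' prox lam ξ z - Hmer f φ f' prox lam ξ zbar| with hDdef
    have hHdiff : Hmer f φ f' prox lam ξ z - Hmer f φ f' prox lam ξ zbar
        = (psiR f φ (prox z) - psiR f φ (prox zbar)) + ξ * lam / 2 * Fw ^ 2 := by
      unfold Hmer
      rw [hF0]
      ring
    have hterm_nn : 0 ≤ ξ * lam / 2 * Fw ^ 2 := by positivity
    have hD_le : D ≤ Δ + ξ * lam / 2 * Fw ^ 2 := by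
      rw [hDdef, hHdiff]
      calc |psiR f φ (prox z) - psiR f φ (prox zbar) + ξ * lam / 2 * Fw ^ 2|
          ≤ |psiR f φ (prox z) - psiR f φ (prox zbar)| + |ξ * lam / 2 * Fw ^ 2| := abs_add_le _ _
        _ = Δ + ξ * lam / 2 * Fw ^ 2 := by rw [abs_of_nonneg hterm_nn]
    have hΔ_le : Δ ≤ D + ξ * lam / 2 * Fw ^ 2 := by
      rw [hΔ]
      have : psiR f φ (prox z) - psiR f φ (prox zbar)
          = (Hmer f φ f' prox lam ξ z - Hmer f φ f' prox lam ξ zbar) - ξ * lam / 2 * Fw ^ 2 := by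
        rw [hHdiff]; ring
      rw [this]
      calc |(Hmer f φ f' prox lam ξ z - Hmer f φ f' prox lam ξ zbar) - ξ * lam / 2 * Fw ^ 2|
          ≤ |Hmer f φ f' prox lam ξ z - Hmer f φ f' prox lam ξ zbar| + |ξ * lam / 2 * Fw ^ 2| :=
            abs_sub _ _
        _ = D + ξ * lam / 2 * Fw ^ 2 := by rw [abs_of_nonneg hterm_nn]
    have hΔ_lt : Δ < min η 1 := by
      have h1 : Δ < ηhat + ηhat := by
        calc Δ ≤ D + ξ * lam / 2 * Fw ^ 2 := hΔ_le
          _ < ηhat + ηhat := by exact add_lt_add hD hz3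
      rw [hηhat] at h1
      linarith
    have hΔ_lt_η : Δ < η := lt_of_lt_of_le hΔ_lt (min_le_left _ _)
    have hΔ_le1 : Δ ≤ 1 := le_of_lt (lt_of_lt_of_le hΔ_lt (min_le_right _ _))
    have hΔnn : 0 ≤ Δ := abs_nonneg _
    have hFw_pow : Fw ^ 2 ≤ Fw ^ (1 / θhat) := by
      rcases eq_or_lt_of_le hFnn with h0 | h0
      · rw [← h0]
        rw [Real.zero_rpow (by positivity : 1 / θhat ≠ 0)]
        norm_num
      · have : Fw ^ (2 : ℝ) ≤ Fw ^ (1 / θhat) :=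
          Real.rpow_le_rpow_of_exponent_ge h0 hz2.le hinv_le2
        rwa [show ((2 : ℝ)) = ((2 : ℕ) : ℝ) by norm_num, Real.rpow_natCast] at this
    by_cases hΔ0 : Δ = 0
    · -- ψ(prox z) = ψ(prox zbar)
      have hψeq : psiR f φ (prox z) - psiR f φ (prox zbar) = 0 := abs_eq_zero.mp hΔ0
      have hDeq : D = ξ * lam / 2 * Fw ^ 2 := by
        rw [hDdef, hHdiff, hψeq, zero_add, abs_of_nonneg hterm_nn]
      rw [hDeq]
      have hFle : Fw ^ ((2 : ℝ) * θhat) ≤ Fw := by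
        rcases eq_or_lt_of_le hFnn with h0 | h0
        · rw [← h0, Real.zero_rpow (by positivity : (2 : ℝ) * θhat ≠ 0)]
        · calc Fw ^ ((2 : ℝ) * θhat) ≤ Fw ^ (1 : ℝ) :=
              Real.rpow_le_rpow_of_exponent_ge h0 hz2.le (by linarith)
            _ = Fw := Real.rpow_one Fw
      calc (ξ * lam / 2 * Fw ^ 2) ^ θhat
          = (ξ * lam / 2) ^ θhat * (Fw ^ 2 : ℝ) ^ θhat :=
            Real.mul_rpow hxl2.le (by positivity)
        _ = (ξ * lam / 2) ^ θhat * Fw ^ ((2 : ℝ) * θhat) := by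
            rw [show (Fw ^ 2 : ℝ) = Fw ^ ((2 : ℕ) : ℝ) from (Real.rpow_natCast Fw 2).symm,
              ← Real.rpow_mul hFnn]
            norm_num
        _ ≤ chat * Fw := by
            apply mul_le_mul _ hFle (Real.rpow_nonneg hFnn _) hchat_nn
            rw [hchatB]
            exact Real.rpow_le_rpow hxl2.le
              (le_add_of_nonneg_left (Real.rpow_nonneg hApos.le _)) hth_pos.le
    · have hΔpos : 0 < Δ := lt_of_le_of_ne hΔnn (Ne.symm hΔ0)
      have hxU : prox z ∈ U := by
        apply hball
        rw [Metric.mem_ball, dist_eq_norm]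
        calc ‖prox z - prox zbar‖ ≤ ‖z - zbar‖ :=
            prox_nonexp φ prox lam hlam hφconv hφnebot hφnetop hprox z zbar
          _ < r := by rwa [Metric.mem_ball, dist_eq_norm] at hz1
      have hsub := prox_subdiff φ prox lam hlam hφconv hφnebot hφnetop hprox z
      have hKLres := hKLU (prox z) hxU hΔpos hΔ_lt_η (lam⁻¹ • (z - prox z)) hsub
      have hKLres' : 1 ≤ A * Δ ^ (-θ) * Fw := hKLres
      have h1 : Δ ^ θ ≤ A * Fw := by
        have hpow : (0 : ℝ) < Δ ^ θ := Real.rpow_pos_of_pos hΔpos θ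
        have h := mul_le_mul_of_nonneg_right hKLres' hpow.le
        rw [one_mul] at h
        calc Δ ^ θ ≤ A * Δ ^ (-θ) * Fw * Δ ^ θ := h
          _ = A * Fw * (Δ ^ (-θ) * Δ ^ θ) := by ring
          _ = A * Fw := by
              rw [← Real.rpow_add hΔpos, neg_add_cancel, Real.rpow_zero, mul_one]
      have h2 : Δ ^ θhat ≤ A * Fw :=
        (Real.rpow_le_rpow_of_exponent_ge hΔpos hΔ_le1 hth_θ).trans h1
      have h3 : Δ ≤ A ^ (1 / θhat) * Fw ^ (1 / θhat) := by
        calc Δ = (Δ ^ θhat) ^ (1 / θhat) := by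
              rw [← Real.rpow_mul hΔnn, mul_one_div_cancel hth_pos.ne', Real.rpow_one]
          _ ≤ (A * Fw) ^ (1 / θhat) :=
              Real.rpow_le_rpow (Real.rpow_nonneg hΔnn _) h2 (by positivity)
          _ = A ^ (1 / θhat) * Fw ^ (1 / θhat) := Real.mul_rpow hApos.le hFnn
      have h5 : D ≤ B * Fw ^ (1 / θhat) := by
        calc D ≤ Δ + ξ * lam / 2 * Fw ^ 2 := hD_le
          _ ≤ A ^ (1 / θhat) * Fw ^ (1 / θhat) + ξ * lam / 2 * Fw ^ (1 / θhat) := by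
              refine add_le_add h3 (mul_le_mul_of_nonneg_left hFw_pow hxl2.le)
          _ = B * Fw ^ (1 / θhat) := by rw [hB]; ring
      calc D ^ θhat ≤ (B * Fw ^ (1 / θhat)) ^ θhat :=
            Real.rpow_le_rpow (abs_nonneg _) h5 hth_pos.le
        _ = B ^ θhat * (Fw ^ (1 / θhat)) ^ θhat :=
            Real.mul_rpow hBpos.le (Real.rpow_nonneg hFnn _)
        _ = chat * Fw := by
            rw [← Real.rpow_mul hFnn, hinv_ge, Real.rpow_one, hchatB]
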